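/- Technical integral estimate: For every integer q ≥ 1 and all complex numbers x₁, x₂ with |x₂| ≤ |x₁|, one has |x₁|^q ≤ 2(q+1)·∫₀¹ |t·x₁ + (1−t)·x₂|^q dt. -/

import Mathlib

open Metric Filter Topology Set intervalIntegral

noncomputable section

/-- **Technical integral estimate.** For `q ≥ 1` and complex numbers `x₁, x₂` with
`|x₂| ≤ |x₁|`, one has `|x₁|^q ≤ 2(q+1)·∫₀¹ |t x₁ + (1−t) x₂|^q dt`. -/
theorem integral_estimate (q : ℕ) (hq : 1 ≤ q) (x₁ x₂ : ℂ)
    (h : ‖x₂‖ ≤ ‖x₁‖) :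
    ‖x₁‖ ^ q ≤
      2 * ((q : ℝ) + 1) *
        ∫ t in (0 : ℝ)..1, ‖(t : ℂ) * x₁ + (1 - (t : ℂ)) * x₂‖ ^ q := by
  set A := ‖x₁‖ with hA
  have hA0 : 0 ≤ A := norm_nonneg _
  have hcont : Continuous fun t : ℝ =>
      ‖(t : ℂ) * x₁ + (1 - (t : ℂ)) * x₂‖ ^ q := by
    exact (continuous_norm.comp (by continuity)).pow q
  have hint : ∀ a b : ℝ, IntervalIntegrable
      (fun t : ℝ => ‖(t : ℂ) * x₁ + (1 - (t : ℂ)) * x₂‖ ^ q)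
      MeasureTheory.volume a b := fun a b => hcont.intervalIntegrable a b
  have hint2 : IntervalIntegrable (fun t : ℝ => (2 * t - 1) ^ q * A ^ q)
      MeasureTheory.volume (1/2) 1 := by
    apply Continuous.intervalIntegrable; fun_prop
  -- lower bound on [1/2, 1]
  have hlow : ∀ t ∈ Set.Icc (1/2 : ℝ) 1,
      (2 * t - 1) ^ q * A ^ q ≤ ‖(t : ℂ) * x₁ + (1 - (t : ℂ)) * x₂‖ ^ q := by
    intro t ht
    rw [← mul_pow]
    apply pow_le_pow_left₀ (by nlinarith [ht.1, ht.2, hA0] : (0 : ℝ) ≤ (2 * t - 1) * A)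
    have h1 : ‖(t : ℂ) * x₁‖ - ‖(1 - (t : ℂ)) * x₂‖
        ≤ ‖(t : ℂ) * x₁ + (1 - (t : ℂ)) * x₂‖ := by
      simpa using
        norm_sub_norm_le ((t : ℂ) * x₁) (-((1 - (t : ℂ)) * x₂))
    have ht0 : (0 : ℝ) ≤ t := by linarith [ht.1]
    have ht1 : t ≤ 1 := ht.2
    have e1 : ‖(t : ℂ) * x₁‖ = t * A := by
      rw [norm_mul, Complex.norm_real, Real.norm_eq_abs, abs_of_nonneg ht0]
    have e2 : ‖(1 - (t : ℂ)) * x₂‖ = (1 - t) * ‖x₂‖ := by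
      rw [norm_mul]
      congr 1
      rw [show (1 - (t : ℂ)) = ((1 - t : ℝ) : ℂ) by push_cast; ring,
        Complex.norm_real, Real.norm_eq_abs, abs_of_nonneg (by linarith)]
    have : (2 * t - 1) * A ≤ t * A - (1 - t) * ‖x₂‖ := by nlinarith
    linarith [e1 ▸ e2 ▸ h1]
  -- value of ∫_{1/2}^1 (2t-1)^q dt
  have hval : (∫ t in (1/2 : ℝ)..1, (2 * t - 1) ^ q * A ^ q)
      = A ^ q / (2 * ((q : ℝ) + 1)) := by
    have := intervalIntegral.integral_comp_mul_add (a := (1/2 : ℝ)) (b := 1)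
      (fun x : ℝ => x ^ q) (two_ne_zero) (-1)
    simp only [show ∀ t : ℝ, 2 * t + (-1) = 2 * t - 1 from fun t => by ring] at this
    rw [intervalIntegral.integral_mul_const, this]
    rw [integral_pow]
    norm_num
    field_simp
    try ring
  -- split integral and bound
  have hsplit : (∫ t in (0 : ℝ)..1, ‖(t : ℂ) * x₁ + (1 - (t : ℂ)) * x₂‖ ^ q)
      = (∫ t in (0 : ℝ)..(1/2), ‖(t : ℂ) * x₁ + (1 - (t : ℂ)) * x₂‖ ^ q)
      + ∫ t in (1/2 : ℝ)..1, ‖(t : ℂ) * x₁ + (1 - (t : ℂ)) * x₂‖ ^ q :=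
    (intervalIntegral.integral_add_adjacent_intervals (hint 0 (1/2)) (hint (1/2) 1)).symm
  have hpos1 : (0 : ℝ) ≤ ∫ t in (0 : ℝ)..(1/2),
      ‖(t : ℂ) * x₁ + (1 - (t : ℂ)) * x₂‖ ^ q := by
    apply intervalIntegral.integral_nonneg (by norm_num)
    intro t _
    positivity
  have hmono : (∫ t in (1/2 : ℝ)..1, (2 * t - 1) ^ q * A ^ q)
      ≤ ∫ t in (1/2 : ℝ)..1, ‖(t : ℂ) * x₁ + (1 - (t : ℂ)) * x₂‖ ^ q := by
    apply intervalIntegral.integral_mono_on (by norm_num) hint2 (hint _ _) hlow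
  have hq1 : (0 : ℝ) < 2 * ((q : ℝ) + 1) := by positivity
  rw [hval] at hmono
  rw [hsplit]
  rw [div_le_iff₀ hq1] at hmono
  nlinarith [hmono, hpos1]
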